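/- For any channel N from finite input set X to finite output set Y and any input distribution p on X, the mutual information between input and output is at most log(Σ_y max_x N(y|x)). -/

import Mathlib

open Finset

/-- The mutual information between the input and output of a channel `N` with input
distribution `p` (terms with `N(y|x) p(x) = 0` contribute `0`). -/
noncomputable def mutualInfo {X Y : Type*} [Fintype X] [Fintype Y]
    (N : X → Y → ℝ) (p : X → ℝ) : ℝ :=
  ∑ x : X, ∑ y : Y, N x y * p x * Real.log (N x y / ∑ z : X, N z y * p z)

theorem mutualInfo_le_log_nu {X Y : Type*} [Fintype X] [Fintype Y] [Nonempty X]
    (N : X → Y → ℝ) (p : X → ℝ)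
    (hNnonneg : ∀ x y, 0 ≤ N x y) (hNstoch : ∀ x, ∑ y : Y, N x y = 1)
    (hpnonneg : ∀ x, 0 ≤ p x) (hpsum : ∑ x : X, p x = 1) :
    mutualInfo N p ≤ Real.log (∑ y : Y, ⨆ x : X, N x y) := by
  classical
  set q : Y → ℝ := fun y => ∑ z : X, N z y * p z with hq
  set ν : Y → ℝ := fun y => ⨆ x : X, N x y with hν
  have hνle : ∀ x y, N x y ≤ ν y := fun x y =>
    le_ciSup (f := fun x => N x y) (Set.Finite.bddAbove (Set.finite_range _)) x
  have hνnonneg : ∀ y, 0 ≤ ν y := fun y =>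
    le_trans (hNnonneg (Classical.arbitrary X) y) (hνle _ y)
  have hqnonneg : ∀ y, 0 ≤ q y := fun y =>
    Finset.sum_nonneg fun z _ => mul_nonneg (hNnonneg z y) (hpnonneg z)
  have hqle : ∀ y, q y ≤ ν y := by
    intro y
    calc q y ≤ ∑ z : X, ν y * p z :=
          Finset.sum_le_sum fun z _ => mul_le_mul_of_nonneg_right (hνle z y) (hpnonneg z)
      _ = ν y := by rw [← Finset.mul_sum, hpsum, mul_one]
  have hqsum : ∑ y : Y, q y = 1 := by
    rw [hq, Finset.sum_comm]
    simp_rw [← Finset.sum_mul]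
    calc ∑ z : X, (∑ y : Y, N z y) * p z = ∑ z : X, p z := by
          refine Finset.sum_congr rfl fun z _ => ?_
          rw [hNstoch z, one_mul]
      _ = 1 := hpsum
  -- S = ∑ ν y ≥ 1 > 0
  set S : ℝ := ∑ y : Y, ν y with hS
  have hSpos : 0 < S := by
    have h1 : (1 : ℝ) ≤ S := by
      rw [← hNstoch (Classical.arbitrary X)]
      exact Finset.sum_le_sum fun y _ => hνle _ y
    linarith
  -- Step 1: mutualInfo ≤ ∑ y, q y * log (ν y / q y)
  have step1 : mutualInfo N p ≤ ∑ y : Y, q y * Real.log (ν y / q y) := by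
    have : mutualInfo N p ≤ ∑ x : X, ∑ y : Y, N x y * p x * Real.log (ν y / q y) := by
      refine Finset.sum_le_sum fun x _ => Finset.sum_le_sum fun y _ => ?_
      rcases eq_or_lt_of_le (mul_nonneg (hNnonneg x y) (hpnonneg x)) with h0 | hpos
      · rw [← h0]; simp
      · have hqpos : 0 < q y := lt_of_lt_of_le hpos
          (Finset.single_le_sum (fun z _ => mul_nonneg (hNnonneg z y) (hpnonneg z))
            (Finset.mem_univ x))
        have hNpos : 0 < N x y := by
          rcases (mul_pos_iff.mp hpos) with ⟨h, _⟩ | ⟨h, _⟩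
          · exact h
          · exact absurd h (not_lt.mpr (hNnonneg x y))
        refine mul_le_mul_of_nonneg_left ?_ (le_of_lt hpos)
        exact Real.log_le_log (div_pos hNpos hqpos)
          (by gcongr; exact hνle x y)
    refine le_trans this (le_of_eq ?_)
    rw [Finset.sum_comm]
    refine Finset.sum_congr rfl fun y _ => ?_
    rw [← Finset.sum_mul]
  refine le_trans step1 ?_
  -- Step 2: ∑ y, q y * log (ν y / q y) ≤ log S
  have key : ∀ y : Y, q y * Real.log (ν y / q y) ≤ ν y / S - q y + q y * Real.log S := by
    intro y
    rcases eq_or_lt_of_le (hqnonneg y) with h0 | hqpos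
    · rw [← h0]
      simp [div_nonneg (hνnonneg y) (le_of_lt hSpos)]
    · have hνpos : 0 < ν y := lt_of_lt_of_le hqpos (hqle y)
      have hlog : Real.log (ν y / q y) = Real.log (ν y / (q y * S)) + Real.log S := by
        rw [← Real.log_mul (by positivity) (ne_of_gt hSpos)]
        congr 1
        field_simp
      rw [hlog, mul_add]
      have hbound : Real.log (ν y / (q y * S)) ≤ ν y / (q y * S) - 1 :=
        Real.log_le_sub_one_of_pos (by positivity)
      have : q y * Real.log (ν y / (q y * S)) ≤ ν y / S - q y := by
        calc q y * Real.log (ν y / (q y * S)) ≤ q y * (ν y / (q y * S) - 1) :=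
              mul_le_mul_of_nonneg_left hbound (le_of_lt hqpos)
          _ = ν y / S - q y := by field_simp
      linarith
  calc ∑ y : Y, q y * Real.log (ν y / q y)
      ≤ ∑ y : Y, (ν y / S - q y + q y * Real.log S) := Finset.sum_le_sum fun y _ => key y
    _ = (∑ y : Y, ν y) / S - (∑ y : Y, q y) + (∑ y : Y, q y) * Real.log S := by
        rw [Finset.sum_add_distrib, Finset.sum_sub_distrib, ← Finset.sum_div,
          ← Finset.sum_mul]
    _ = Real.log S := by
        rw [hqsum, ← hS, div_self (ne_of_gt hSpos)]
        ring
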